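/- Let $b > -2$, $\xi > 0$, and set $\Gamma_n := \Gamma(n+b)$ for $n \ge 2$. Then there exists $\bar C = \bar C(b,\xi) > 0$ such that for all $k \ge 4$: $\sum_{l=2}^{\lfloor k/2 \rfloor} \xi^{l-2}\, \Gamma_{k-2(l-1)} \le \bar C\, \Gamma_{k-2}$. -/

import Mathlib

open Real in
lemma gamma_grow (a : ℝ) (ha : 0 < a) : ∀ (n : ℕ) (x : ℝ), a ≤ x →
    a * (a+1) * 4^n * (n.factorial)^2 * Real.Gamma x ≤ Real.Gamma (x + 2*n + 2) := by
  intro n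
  induction n with
  | zero =>
    intro x hx
    have hx0 : 0 < x := ha.trans_le hx
    have h1 : Real.Gamma (x + 2*(0:ℕ) + 2) = (x+1) * (x * Real.Gamma x) := by
      push_cast
      rw [show x + 2*(0:ℝ) + 2 = (x+1) + 1 by ring, Real.Gamma_add_one (by positivity),
        Real.Gamma_add_one hx0.ne']
    rw [h1]
    have hg := Real.Gamma_pos_of_pos hx0
    have h2 : a*(a+1) ≤ (x+1)*x := by nlinarith
    calc a * (a + 1) * 4^(0:ℕ) * ((Nat.factorial 0:ℝ)) ^ 2 * Real.Gamma x = (a*(a+1)) * Real.Gamma x := by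
          simp
      _ ≤ ((x+1)*x) * Real.Gamma x := mul_le_mul_of_nonneg_right h2 hg.le
      _ = (x+1) * (x * Real.Gamma x) := by ring
  | succ n ih =>
    intro x hx
    have hx0 : 0 < x := ha.trans_le hx
    have h1 : Real.Gamma (x + 2*(n+1:ℕ) + 2) = (x+2*n+3) * ((x+2*n+2) * Real.Gamma (x + 2*n + 2)) := by
      push_cast
      rw [show x + 2*((n:ℝ)+1) + 2 = (x+2*n+3) + 1 by ring, Real.Gamma_add_one (by positivity),
        show x + 2*(n:ℝ) + 3 = (x+2*(n:ℝ)+2) + 1 by ring, Real.Gamma_add_one (by positivity)]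
    rw [h1]
    have h2 := ih x hx
    have hgpos : 0 < Real.Gamma (x + 2*n + 2) := Real.Gamma_pos_of_pos (by positivity)
    have hfac : (Nat.factorial (n+1) : ℝ) = (n+1) * n.factorial := by
      push_cast [Nat.factorial_succ]; ring
    have hn1 : ((2:ℝ)*n+2) ≤ x + 2*n + 2 := by linarith
    have hn2 : ((2:ℝ)*n+2) ≤ x + 2*n + 3 := by linarith
    have key : a * (a+1) * 4^(n+1) * ((n+1).factorial:ℝ)^2 * Real.Gamma x
        = (2*(n:ℝ)+2) * ((2*(n:ℝ)+2) * (a * (a+1) * 4^n * (n.factorial:ℝ)^2 * Real.Gamma x)) := by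
      rw [hfac]; ring
    rw [key]
    have hga := Real.Gamma_pos_of_pos hx0
    have hpos : (0:ℝ) < 2*(n:ℝ)+2 := by positivity
    calc (2*(n:ℝ)+2) * ((2*(n:ℝ)+2) * (a * (a+1) * 4^n * (n.factorial:ℝ)^2 * Real.Gamma x))
        ≤ (2*(n:ℝ)+2) * ((2*(n:ℝ)+2) * Real.Gamma (x + 2*n + 2)) := by
          apply mul_le_mul_of_nonneg_left _ hpos.le
          exact mul_le_mul_of_nonneg_left h2 hpos.le
      _ ≤ (x+2*n+3) * ((x+2*n+2) * Real.Gamma (x + 2*n + 2)) := by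
          apply mul_le_mul hn2 (mul_le_mul_of_nonneg_right hn1 hgpos.le) (by positivity) (by positivity)

theorem stmt_17 (b ξ : ℝ) (hb : b > -2) (hξ : ξ > 0) :
    ∃ C : ℝ, C > 0 ∧ ∀ k : ℕ, 4 ≤ k →
      ∑ l ∈ Finset.Icc 2 (k / 2), ξ ^ (l - 2) * Real.Gamma ((k : ℝ) - 2 * (l - 1) + b) ≤
        C * Real.Gamma ((k - 2 : ℕ) + b) := by
  set a : ℝ := b + 2 with ha_def
  have ha : 0 < a := by simp [ha_def]; linarith
  have ha1 : 0 < a * (a+1) := by positivity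
  refine ⟨1 + ξ * Real.exp ξ / (a*(a+1)), by positivity, ?_⟩
  intro k hk
  have hN : 2 ≤ k / 2 := by omega
  have hcast : ((k - 2 : ℕ) : ℝ) + b = (k:ℝ) - 2 + b := by
    have : ((k - 2 : ℕ) : ℝ) = (k:ℝ) - 2 := by
      push_cast [Nat.cast_sub (by omega : 2 ≤ k)]; ring
    rw [this]
  rw [hcast]
  set G := Real.Gamma ((k:ℝ) - 2 + b) with hG_def
  have hk4 : (4:ℝ) ≤ (k:ℝ) := by exact_mod_cast hk
  have hGpos : 0 < G := Real.Gamma_pos_of_pos (by linarith)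
  have hsplit : Finset.Icc 2 (k/2) = insert 2 (Finset.Icc 3 (k/2)) := by
    ext x; simp [Finset.mem_Icc, Finset.mem_insert]; omega
  rw [hsplit, Finset.sum_insert (by simp)]
  have hterm2 : ξ ^ (2 - 2) * Real.Gamma ((k : ℝ) - 2 * ((2:ℕ) - 1) + b) = G := by
    norm_num; rfl
  -- bound each term of the tail
  have htail : ∀ l ∈ Finset.Icc 3 (k/2),
      ξ ^ (l - 2) * Real.Gamma ((k : ℝ) - 2 * ((l:ℝ) - 1) + b)
        ≤ (G * ξ / (a*(a+1))) * (ξ ^ (l-3) / (Nat.factorial (l-3))) := by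
    intro l hl
    rw [Finset.mem_Icc] at hl
    obtain ⟨hl3, hlN⟩ := hl
    have h2l : 2 * l ≤ k := by
      have := Nat.div_mul_le_self k 2
      omega
    set x : ℝ := (k : ℝ) - 2 * ((l:ℝ) - 1) + b with hx_def
    have hax : a ≤ x := by
      have : (2 * l : ℝ) ≤ k := by exact_mod_cast h2l
      rw [hx_def, ha_def]; push_cast; linarith
    set n : ℕ := l - 3 with hn_def
    have hxn : x + 2*n + 2 = (k:ℝ) - 2 + b := by
      have hcn : (n:ℝ) = (l:ℝ) - 3 := by
        rw [hn_def]; push_cast [Nat.cast_sub hl3]; ring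
      rw [hx_def, hcn]; ring
    have hgg := gamma_grow a ha n x hax
    rw [hxn, ← hG_def] at hgg
    have hA : (0:ℝ) < a * (a+1) * 4^n * (Nat.factorial n)^2 := by positivity
    have hGx : Real.Gamma x ≤ G / (a * (a+1) * 4^n * (Nat.factorial n)^2) := by
      rw [le_div_iff₀ hA]; linarith [hgg]
    have hl2 : l - 2 = n + 1 := by omega
    have hGxpos : 0 < Real.Gamma x := Real.Gamma_pos_of_pos (lt_of_lt_of_le ha hax)
    calc ξ ^ (l - 2) * Real.Gamma x
        ≤ ξ ^ (n+1) * (G / (a * (a+1) * 4^n * (Nat.factorial n)^2)) := by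
          rw [hl2]
          exact mul_le_mul_of_nonneg_left hGx (by positivity)
      _ ≤ ξ ^ (n+1) * (G / (a * (a+1) * (Nat.factorial n))) := by
          apply mul_le_mul_of_nonneg_left _ (by positivity)
          apply div_le_div_of_nonneg_left hGpos.le (by positivity)
          have h4 : (1:ℝ) ≤ 4^n := one_le_pow₀ (by norm_num)
          have hf : (1:ℝ) ≤ Nat.factorial n := by exact_mod_cast Nat.one_le_iff_ne_zero.mpr n.factorial_ne_zero
          have key : (Nat.factorial n:ℝ) ≤ 4^n * (Nat.factorial n)^2 := by
            nlinarith [hf, h4, sq_nonneg ((Nat.factorial n:ℝ))]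
          nlinarith [mul_le_mul_of_nonneg_left key ha1.le]
      _ = (G * ξ / (a*(a+1))) * (ξ ^ n / (Nat.factorial n)) := by
          field_simp; ring
  have hsum := Finset.sum_le_sum htail
  have hre : ∑ l ∈ Finset.Icc 3 (k/2), (G * ξ / (a*(a+1))) * (ξ ^ (l-3) / (Nat.factorial (l-3)))
      ≤ (G * ξ / (a*(a+1))) * Real.exp ξ := by
    rw [← Finset.mul_sum]
    apply mul_le_mul_of_nonneg_left _ (by positivity)
    rw [← Finset.Ico_add_one_right_eq_Icc, Finset.sum_Ico_eq_sum_range]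
    have : ∀ i, ξ ^ ((3 + i) - 3) / (Nat.factorial ((3 + i) - 3) : ℝ) = ξ ^ i / Nat.factorial i := by
      intro i; simp only [show 3 + i - 3 = i from by omega]
    calc ∑ i ∈ Finset.range (k/2 + 1 - 3), ξ ^ ((3 + i) - 3) / (Nat.factorial ((3 + i) - 3) : ℝ)
        = ∑ i ∈ Finset.range (k/2 + 1 - 3), ξ ^ i / (Nat.factorial i : ℝ) := by
          apply Finset.sum_congr rfl; intro i _; exact this i
      _ ≤ Real.exp ξ := Real.sum_le_exp_of_nonneg hξ.le _
  have := le_trans hsum hre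
  calc ξ ^ (2 - 2) * Real.Gamma ((k : ℝ) - 2 * ((2:ℕ) - 1) + b)
        + ∑ l ∈ Finset.Icc 3 (k/2), ξ ^ (l - 2) * Real.Gamma ((k : ℝ) - 2 * ((l:ℝ) - 1) + b)
      ≤ G + (G * ξ / (a*(a+1))) * Real.exp ξ := by
        rw [hterm2]; linarith
    _ = (1 + ξ * Real.exp ξ / (a*(a+1))) * G := by field_simp
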